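/- Let F : [0,1] → [0,1] be a differentiable cumulative distribution function with F' ∈ C^{α,R} and F'(x) ≥ c > 0 for all x. Then F is invertible, F^{-1} is differentiable with (F^{-1})'(s) = 1/F'(F^{-1}(s)), and (F^{-1})' is α-Hölder continuous on [0,1] with Hölder constant at most R/c^{2+α} (up to a constant factor). -/

import Mathlib

/-- Let `F : [0,1] → [0,1]` be a differentiable c.d.f. with `F' ∈ C^{α,R}` (sup norm and
`α`-Hölder seminorm bounded by `R`) and `F' ≥ c > 0`. Then `F` is invertible with inverse `G`,
`G = F⁻¹` is differentiable with `(F⁻¹)'(s) = 1/F'(F⁻¹(s))`, and `(F⁻¹)'` is `α`-Hölder on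
`[0,1]` with Hölder constant at most `R/c^{2+α}` up to a constant factor. -/
theorem inverse_cdf_derivative_holder (α R c : ℝ) (hα : 0 < α) (hα1 : α ≤ 1)
    (hR : 0 < R) (hc : 0 < c) (F F' : ℝ → ℝ)
    (hderiv : ∀ x ∈ Set.Icc (0 : ℝ) 1, HasDerivWithinAt F (F' x) (Set.Icc 0 1) x)
    (hF0 : F 0 = 0) (hF1 : F 1 = 1)
    (hsup : ∀ x ∈ Set.Icc (0 : ℝ) 1, |F' x| ≤ R)
    (hHolder : ∀ x ∈ Set.Icc (0 : ℝ) 1, ∀ y ∈ Set.Icc (0 : ℝ) 1,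
      |F' x - F' y| ≤ R * |x - y| ^ α)
    (hlow : ∀ x ∈ Set.Icc (0 : ℝ) 1, c ≤ F' x) :
    ∃ G : ℝ → ℝ,
      (∀ x ∈ Set.Icc (0 : ℝ) 1, G (F x) = x) ∧
      (∀ s ∈ Set.Icc (0 : ℝ) 1, F (G s) = s) ∧
      (∀ s ∈ Set.Icc (0 : ℝ) 1, HasDerivWithinAt G (1 / F' (G s)) (Set.Icc 0 1) s) ∧
      ∃ C : ℝ, 0 < C ∧ ∀ s ∈ Set.Icc (0 : ℝ) 1, ∀ t ∈ Set.Icc (0 : ℝ) 1,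
        |1 / F' (G s) - 1 / F' (G t)| ≤ C * (R / c ^ (2 + α)) * |s - t| ^ α := by
  have I01 : (0:ℝ) ≤ 1 := by norm_num
  set I := Set.Icc (0:ℝ) 1 with hIdef
  have contF : ContinuousOn F I := fun x hx => (hderiv x hx).continuousWithinAt
  have hderivAt : ∀ x ∈ interior I, HasDerivAt F (F' x) x := by
    intro x hx
    rw [hIdef, interior_Icc] at hx
    exact (hderiv x (Set.Ioo_subset_Icc_self hx)).hasDerivAt (Icc_mem_nhds hx.1 hx.2)
  have key : ∀ x ∈ I, ∀ y ∈ I, x ≤ y → c * (y - x) ≤ F y - F x := by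
    apply Convex.mul_sub_le_image_sub_of_le_deriv (convex_Icc 0 1) contF
    · intro x hx; exact (hderivAt x hx).differentiableAt.differentiableWithinAt
    · intro x hx; rw [(hderivAt x hx).deriv]; exact hlow x (interior_subset hx)
  have key2 : ∀ x ∈ I, ∀ y ∈ I, c * |x - y| ≤ |F x - F y| := by
    intro x hx y hy
    rcases le_total x y with h | h
    · have := key x hx y hy h
      rw [abs_sub_comm x y, abs_sub_comm (F x) (F y),
        abs_of_nonneg (by linarith), abs_of_nonneg (by nlinarith)]
      linarith
    · have := key y hy x hx h
      rw [abs_of_nonneg (by linarith), abs_of_nonneg (by nlinarith)]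
      linarith
  have hmono : StrictMonoOn F I := by
    intro x hx y hy hxy
    have := key x hx y hy hxy.le
    nlinarith
  have hsurj : Set.SurjOn F I I := by
    intro s hs
    have h := intermediate_value_Icc I01 contF
    rw [hF0, hF1] at h
    exact h hs
  set G := Function.invFunOn F I with hGdef
  have hGF : ∀ x ∈ I, G (F x) = x := fun x hx => hmono.injOn.leftInvOn_invFunOn hx
  have hFG : ∀ s ∈ I, F (G s) = s := fun s hs => hsurj.rightInvOn_invFunOn hs
  have hGmem : ∀ s ∈ I, G s ∈ I := fun s hs => hsurj.mapsTo_invFunOn hs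
  have hGlip : ∀ s ∈ I, ∀ t ∈ I, c * |G s - G t| ≤ |s - t| := by
    intro s hs t ht
    have := key2 (G s) (hGmem s hs) (G t) (hGmem t ht)
    rwa [hFG s hs, hFG t ht] at this
  have hGlip' : ∀ s ∈ I, ∀ t ∈ I, |G s - G t| ≤ |s - t| / c := by
    intro s hs t ht
    rw [le_div_iff₀ hc]
    have := hGlip s hs t ht
    nlinarith [abs_nonneg (G s - G t)]
  have hGcont : ContinuousOn G I := by
    apply LipschitzOnWith.continuousOn (K := ⟨c⁻¹, by positivity⟩)
    apply LipschitzOnWith.of_dist_le_mul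
    intro s hs t ht
    rw [Real.dist_eq, Real.dist_eq]; change _ ≤ c⁻¹ * _; rw [inv_mul_eq_div]
    exact hGlip' s hs t ht
  refine ⟨G, hGF, hFG, ?_, ?_⟩
  · intro s hs
    have hxI : G s ∈ I := hGmem s hs
    have hFx : F (G s) = s := hFG s hs
    have hne : F' (G s) ≠ 0 := ne_of_gt (lt_of_lt_of_le hc (hlow _ hxI))
    rw [hasDerivWithinAt_iff_tendsto_slope]
    have hFslope : Filter.Tendsto (slope F (G s)) (nhdsWithin (G s) (I \ {G s}))
        (nhds (F' (G s))) := hasDerivWithinAt_iff_tendsto_slope.mp (hderiv _ hxI)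
    have hGt : Filter.Tendsto G (nhdsWithin s (I \ {s}))
        (nhdsWithin (G s) (I \ {G s})) := by
      apply tendsto_nhdsWithin_of_tendsto_nhds_of_eventually_within
      · exact ((hGcont s hs).tendsto).mono_left (nhdsWithin_mono s Set.diff_subset)
      · filter_upwards [self_mem_nhdsWithin] with t ht
        refine ⟨hGmem t ht.1, fun h => ht.2 ?_⟩
        rw [Set.mem_singleton_iff] at h ⊢
        rw [← hFG t ht.1, h, hFx]
    have h1 : Filter.Tendsto (fun t => (slope F (G s) (G t))⁻¹)
        (nhdsWithin s (I \ {s})) (nhds (F' (G s))⁻¹) :=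
      ((hFslope.comp hGt).inv₀ hne)
    rw [one_div]
    apply h1.congr'
    filter_upwards [self_mem_nhdsWithin] with t ht
    rw [slope_def_field, slope_def_field, hFG t ht.1, hFx, inv_div]
  · refine ⟨1, one_pos, ?_⟩
    intro s hs t ht
    have hgs := hGmem s hs
    have hgt := hGmem t ht
    have has : c ≤ F' (G s) := hlow _ hgs
    have hat : c ≤ F' (G t) := hlow _ hgt
    have hbs : (0:ℝ) < F' (G s) := lt_of_lt_of_le hc has
    have hbt : (0:ℝ) < F' (G t) := lt_of_lt_of_le hc hat
    have hc2 : c ^ ((2:ℝ) + α) = c * c * c ^ α := by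
      rw [Real.rpow_add hc]
      congr 1
      rw [show (2:ℝ) = ((2:ℕ):ℝ) by norm_num, Real.rpow_natCast]
      ring
    have h1 : |1 / F' (G s) - 1 / F' (G t)|
        = |F' (G t) - F' (G s)| / (F' (G s) * F' (G t)) := by
      rw [one_div, one_div, inv_sub_inv (ne_of_gt hbs) (ne_of_gt hbt), abs_div]
      congr 1
      exact abs_of_pos (mul_pos hbs hbt)
    have hrp : |G t - G s| ^ α ≤ |s - t| ^ α / c ^ α := by
      rw [← Real.div_rpow (abs_nonneg _) hc.le]
      apply Real.rpow_le_rpow (abs_nonneg _) _ hα.le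
      rw [abs_sub_comm s t]
      exact hGlip' t ht s hs
    calc |1 / F' (G s) - 1 / F' (G t)|
        = |F' (G t) - F' (G s)| / (F' (G s) * F' (G t)) := h1
      _ ≤ (R * (|s - t| ^ α / c ^ α)) / (c * c) := by
          apply div_le_div₀ (by positivity) _ (by positivity) (by nlinarith)
          calc |F' (G t) - F' (G s)| ≤ R * |G t - G s| ^ α :=
                hHolder (G t) hgt (G s) hgs
            _ ≤ R * (|s - t| ^ α / c ^ α) :=
                mul_le_mul_of_nonneg_left hrp hR.le
      _ = 1 * (R / c ^ ((2:ℝ) + α)) * |s - t| ^ α := by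
          have hcα : (0:ℝ) < c ^ α := Real.rpow_pos_of_pos hc α
          rw [hc2, one_mul]
          field_simp [hcα.ne']
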